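/- Consider the scalar delay difference equation x(m+1) = c(m)x(m-τ) + h(m, x_m), m ≥ 0, where c : ℕ → ℝ satisfies |c(m)| ≤ c for a constant c ∈ (0,1], h satisfies the Lipschitz bound |h(m,α) - h(m,β)| ≤ H(m)‖α - β‖ for histories α, β, and the quantity λ := max_{s=0,...,τ} sup_{n≥1} Σ_{l=0}^{n-1} (∏_{k=l+1}^{n-1} |c(k(τ+1)+τ-s)|) H(l(τ+1)+τ-s) c^{l + (r-s-1)/(τ+1) - n + 1} satisfies λ < 1. Then for any two solutions x, y with initial histories α, β one has ‖x_m - y_m‖ ≤ (c^{r/(τ+1) - 1}/(1-λ)) (c^{1/(τ+1)})^m ‖α - β‖ for all m ≥ 0. -/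

import Mathlib

/-- scalar case of Theorem 2.2 (the main stability theorem). -/
theorem main_stability_theorem_scalar
    (τ : ℕ) (r : ℤ) (hr : r ≤ -(τ : ℤ))
    (c : ℕ → ℝ) (cbar : ℝ) (hc0 : 0 < cbar) (hc1 : cbar ≤ 1)
    (hc : ∀ m, |c m| ≤ cbar)
    (h : ℕ → ((Finset.Icc r (0 : ℤ)) → ℝ) → ℝ) (H : ℕ → ℝ)
    (hLip : ∀ (m : ℕ) (α β : (Finset.Icc r (0 : ℤ)) → ℝ),
      |h m α - h m β| ≤ H m * ‖α - β‖)
    (lam : ℝ) (hlam : lam < 1)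
    (hlamSum : ∀ s : ℕ, s ≤ τ → ∀ n : ℕ, 1 ≤ n →
      (∑ l ∈ Finset.range n,
        (∏ k ∈ Finset.Ico (l + 1) n, |c (k * (τ + 1) + τ - s)|) *
          H (l * (τ + 1) + τ - s) *
          cbar ^ ((l : ℝ) + ((r : ℝ) - s - 1) / (τ + 1) - n + 1)) ≤ lam)
    (x y : ℤ → ℝ)
    (hx : ∀ m : ℕ, x ((m : ℤ) + 1) =
      c m * x ((m : ℤ) - τ) + h m (fun j => x ((m : ℤ) + (j : ℤ))))
    (hy : ∀ m : ℕ, y ((m : ℤ) + 1) =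
      c m * y ((m : ℤ) - τ) + h m (fun j => y ((m : ℤ) + (j : ℤ)))) :
    ∀ m : ℕ,
      ‖(fun j : (Finset.Icc r (0 : ℤ)) => x ((m : ℤ) + (j : ℤ))) -
          (fun j : (Finset.Icc r (0 : ℤ)) => y ((m : ℤ) + (j : ℤ)))‖ ≤
        cbar ^ ((r : ℝ) / (τ + 1) - 1) / (1 - lam) *
          (cbar ^ ((1 : ℝ) / (τ + 1))) ^ m *
          ‖(fun j : (Finset.Icc r (0 : ℤ)) => x (j : ℤ)) -
              (fun j : (Finset.Icc r (0 : ℤ)) => y (j : ℤ))‖ := by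
  have hr0 : r ≤ 0 := by omega
  have hτR : (0:ℝ) < (τ:ℝ) + 1 := by positivity
  set Z : ℤ → ℝ := fun t => x t - y t with hZ
  set D : ℕ → ℝ := fun m => ‖(fun j : (Finset.Icc r (0:ℤ)) => Z ((m:ℤ) + (j:ℤ)))‖ with hD
  have hDnn : ∀ m, 0 ≤ D m := fun m => norm_nonneg _
  have hcomp : ∀ (m : ℕ) (j : (Finset.Icc r (0:ℤ))), |Z ((m:ℤ) + (j:ℤ))| ≤ D m := by
    intro m j
    have := norm_le_pi_norm (fun j : (Finset.Icc r (0:ℤ)) => Z ((m:ℤ) + (j:ℤ))) j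
    simpa [Real.norm_eq_abs] using this
  have hzero_mem : (0:ℤ) ∈ Finset.Icc r (0:ℤ) := by
    simp only [Finset.mem_Icc]; omega
  have hHnn : ∀ m, 0 ≤ H m := by
    intro m
    by_contra hneg
    push_neg at hneg
    have h1 : (1:ℝ) ≤ ‖(fun _ : (Finset.Icc r (0:ℤ)) => (0:ℝ)) - (fun _ => (1:ℝ))‖ := by
      have := norm_le_pi_norm ((fun _ : (Finset.Icc r (0:ℤ)) => (0:ℝ)) - (fun _ => (1:ℝ)))
        ⟨0, hzero_mem⟩
      simpa using this
    have h2 := hLip m (fun _ => 0) (fun _ => 1)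
    have h3 : (0:ℝ) ≤ H m * ‖(fun _ : (Finset.Icc r (0:ℤ)) => (0:ℝ)) - (fun _ => (1:ℝ))‖ :=
      le_trans (abs_nonneg _) h2
    nlinarith
  have hlam0 : 0 ≤ lam := by
    refine le_trans ?_ (hlamSum 0 (Nat.zero_le τ) 1 le_rfl)
    refine Finset.sum_nonneg fun l _ => ?_
    exact mul_nonneg (mul_nonneg (Finset.prod_nonneg fun _ _ => abs_nonneg _) (hHnn _))
      (Real.rpow_nonneg hc0.le _)
  have h1lam : 0 < 1 - lam := by linarith
  have hμpow : ∀ k : ℕ, (cbar ^ ((1:ℝ)/((τ:ℝ)+1))) ^ k = cbar ^ ((k:ℝ)/((τ:ℝ)+1)) := by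
    intro k
    rw [← Real.rpow_natCast (cbar ^ ((1:ℝ)/((τ:ℝ)+1))) k, ← Real.rpow_mul hc0.le]
    congr 1
    ring
  have hstep : ∀ m : ℕ, |Z ((m:ℤ) + 1)| ≤ |c m| * |Z ((m:ℤ) - (τ:ℤ))| + H m * D m := by
    intro m
    have hzz : Z ((m:ℤ) + 1) = c m * Z ((m:ℤ) - (τ:ℤ)) +
        (h m (fun j => x ((m:ℤ) + (j:ℤ))) - h m (fun j => y ((m:ℤ) + (j:ℤ)))) := by
      simp only [hZ]
      rw [hx m, hy m]
      ring
    rw [hzz]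
    refine le_trans (abs_add_le _ _) (add_le_add (le_of_eq (abs_mul _ _)) ?_)
    exact hLip m (fun j => x ((m:ℤ) + (j:ℤ))) (fun j => y ((m:ℤ) + (j:ℤ)))
  have hunroll : ∀ s : ℕ, s ≤ τ → ∀ n : ℕ,
      |Z (((n*(τ+1) : ℕ) : ℤ) - (s:ℤ))| ≤
        (∏ k ∈ Finset.range n, |c (k*(τ+1)+τ-s)|) * |Z (-(s:ℤ))| +
        ∑ l ∈ Finset.range n,
          (∏ k ∈ Finset.Ico (l+1) n, |c (k*(τ+1)+τ-s)|) * H (l*(τ+1)+τ-s) *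
            D (l*(τ+1)+τ-s) := by
    intro s hs n
    induction n with
    | zero => simp
    | succ n ih =>
      have hrel : (n+1)*(τ+1) = n*(τ+1)+(τ+1) := by ring
      have hm1 : (((n+1)*(τ+1) : ℕ) : ℤ) - (s:ℤ) = ((n*(τ+1)+τ-s : ℕ) : ℤ) + 1 := by omega
      have hm2 : ((n*(τ+1)+τ-s : ℕ) : ℤ) - (τ:ℤ) = ((n*(τ+1) : ℕ) : ℤ) - (s:ℤ) := by omega
      calc |Z (((n+1)*(τ+1) : ℕ) - (s:ℤ))|
          = |Z (((n*(τ+1)+τ-s : ℕ) : ℤ) + 1)| := by rw [hm1]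
        _ ≤ |c (n*(τ+1)+τ-s)| * |Z (((n*(τ+1)+τ-s : ℕ) : ℤ) - (τ:ℤ))| +
            H (n*(τ+1)+τ-s) * D (n*(τ+1)+τ-s) := hstep _
        _ ≤ |c (n*(τ+1)+τ-s)| *
              ((∏ k ∈ Finset.range n, |c (k*(τ+1)+τ-s)|) * |Z (-(s:ℤ))| +
              ∑ l ∈ Finset.range n,
                (∏ k ∈ Finset.Ico (l+1) n, |c (k*(τ+1)+τ-s)|) * H (l*(τ+1)+τ-s) *
                  D (l*(τ+1)+τ-s)) +
            H (n*(τ+1)+τ-s) * D (n*(τ+1)+τ-s) := by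
              rw [hm2]
              exact add_le_add (mul_le_mul_of_nonneg_left ih (abs_nonneg _)) le_rfl
        _ = (∏ k ∈ Finset.range (n+1), |c (k*(τ+1)+τ-s)|) * |Z (-(s:ℤ))| +
            ∑ l ∈ Finset.range (n+1),
              (∏ k ∈ Finset.Ico (l+1) (n+1), |c (k*(τ+1)+τ-s)|) * H (l*(τ+1)+τ-s) *
                D (l*(τ+1)+τ-s) := by
              have hsplit : ∑ l ∈ Finset.range (n+1),
                    (∏ k ∈ Finset.Ico (l+1) (n+1), |c (k*(τ+1)+τ-s)|) * H (l*(τ+1)+τ-s) *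
                      D (l*(τ+1)+τ-s)
                  = (∑ l ∈ Finset.range n, |c (n*(τ+1)+τ-s)| *
                      ((∏ k ∈ Finset.Ico (l+1) n, |c (k*(τ+1)+τ-s)|) * H (l*(τ+1)+τ-s) *
                        D (l*(τ+1)+τ-s))) + H (n*(τ+1)+τ-s) * D (n*(τ+1)+τ-s) := by
                rw [Finset.sum_range_succ, Finset.Ico_self, Finset.prod_empty, one_mul]
                congr 1
                refine Finset.sum_congr rfl fun l hl => ?_
                rw [Finset.prod_Ico_succ_top
                  (by have := Finset.mem_range.mp hl; omega : l+1 ≤ n)]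
                ring
              rw [hsplit, Finset.prod_range_succ, ← Finset.mul_sum]
              ring
  have main : ∀ m : ℕ, D m ≤ cbar ^ ((r:ℝ)/((τ:ℝ)+1) - 1)/(1-lam) *
      (cbar ^ ((1:ℝ)/((τ:ℝ)+1)))^m * D 0 := by
    intro m
    induction m using Nat.strong_induction_on with
    | _ m ih =>
    have hRnn : 0 ≤ cbar ^ ((r:ℝ)/((τ:ℝ)+1) - 1)/(1-lam) * (cbar ^ ((1:ℝ)/((τ:ℝ)+1)))^m * D 0 :=
      mul_nonneg (mul_nonneg (div_nonneg (Real.rpow_nonneg hc0.le _) h1lam.le)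
        (pow_nonneg (Real.rpow_nonneg hc0.le _) _)) (hDnn 0)
    simp only [hD]
    refine (pi_norm_le_iff_of_nonneg hRnn).mpr ?_
    rintro ⟨jv, hjv⟩
    have hj1 : r ≤ jv ∧ jv ≤ 0 := Finset.mem_Icc.mp hjv
    simp only [Real.norm_eq_abs]
    show |Z ((m:ℤ) + jv)| ≤ _
    by_cases hle : (m:ℤ) + jv ≤ 0
    · have hmem : (m:ℤ) + jv ∈ Finset.Icc r (0:ℤ) := Finset.mem_Icc.mpr ⟨by omega, hle⟩
      have hb : |Z ((m:ℤ) + jv)| ≤ D 0 := by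
        have := hcomp 0 ⟨(m:ℤ)+jv, hmem⟩
        simpa using this
      have hrm : (r:ℝ) + (m:ℝ) ≤ 0 := by
        have h4 : r + (m:ℤ) ≤ 0 := by omega
        exact_mod_cast h4
      have hexp : (r:ℝ)/((τ:ℝ)+1) - 1 + (m:ℝ)/((τ:ℝ)+1) ≤ 0 := by
        have h4 : ((r:ℝ)+(m:ℝ))/((τ:ℝ)+1) ≤ 0 := div_nonpos_of_nonpos_of_nonneg hrm hτR.le
        have h5 : (r:ℝ)/((τ:ℝ)+1) + (m:ℝ)/((τ:ℝ)+1) = ((r:ℝ)+(m:ℝ))/((τ:ℝ)+1) := by ring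
        linarith
      have hone : 1 ≤ cbar ^ ((r:ℝ)/((τ:ℝ)+1) - 1) / (1-lam) * (cbar ^ ((1:ℝ)/((τ:ℝ)+1)))^m := by
        rw [hμpow m, div_mul_eq_mul_div, ← Real.rpow_add hc0, le_div_iff₀ h1lam, one_mul]
        have h6 := Real.rpow_le_rpow_of_exponent_ge hc0 hc1 hexp
        rw [Real.rpow_zero] at h6
        linarith
      calc |Z ((m:ℤ)+jv)| ≤ D 0 := hb
        _ = 1 * D 0 := (one_mul _).symm
        _ ≤ _ := mul_le_mul_of_nonneg_right hone (hDnn 0)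
    · push_neg at hle
      set q : ℕ := ((m:ℤ)+jv).toNat with hq
      have hqZ : ((m:ℤ)+jv) = (q:ℤ) := by omega
      have hq1 : 1 ≤ q := by omega
      set d : ℕ := (q-1)/(τ+1) with hd
      set md : ℕ := (q-1)%(τ+1) with hmd
      have hdm : (τ+1) * d + md = q - 1 := by
        rw [hd, hmd]; exact Nat.div_add_mod (q-1) (τ+1)
      have hmdlt : md < τ+1 := by
        rw [hmd]; exact Nat.mod_lt _ (by omega)
      set n : ℕ := d + 1 with hn
      set s : ℕ := τ - md with hs
      have hsτ : s ≤ τ := by omega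
      have hn1 : 1 ≤ n := Nat.succ_le_succ (Nat.zero_le d)
      have hqns : n * (τ+1) = q + s := by
        have h2 : n * (τ+1) = (τ+1) * d + (τ+1) := by ring
        omega
      have hidx : ∀ l, l < n → l*(τ+1)+τ-s < m := by
        intro l hl
        have h2 : (l+1) * (τ+1) ≤ n * (τ+1) := Nat.mul_le_mul_right _ hl
        have h3 : (l+1)*(τ+1) = l*(τ+1) + (τ+1) := by ring
        have hqm : q ≤ m := by omega
        omega
      have hZs : |Z (-(s:ℤ))| ≤ D 0 := by
        have hmem : (-(s:ℤ)) ∈ Finset.Icc r (0:ℤ) := Finset.mem_Icc.mpr ⟨by omega, by omega⟩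
        have := hcomp 0 ⟨-(s:ℤ), hmem⟩
        simpa using this
      have hprod : (∏ k ∈ Finset.range n, |c (k*(τ+1)+τ-s)|) ≤ cbar ^ n := by
        calc (∏ k ∈ Finset.range n, |c (k*(τ+1)+τ-s)|)
            ≤ ∏ _k ∈ Finset.range n, cbar :=
              Finset.prod_le_prod (fun _ _ => abs_nonneg _) (fun k _ => hc _)
          _ = cbar ^ n := by rw [Finset.prod_const, Finset.card_range]
      set K : ℝ := cbar ^ ((r:ℝ)/((τ:ℝ)+1) - 1)/(1-lam) with hK
      have hKnn : 0 ≤ K := div_nonneg (Real.rpow_nonneg hc0.le _) h1lam.le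
      set F : ℝ := (n:ℝ) - (r:ℝ)/((τ:ℝ)+1) with hF
      have hsum1 : ∑ l ∈ Finset.range n,
            (∏ k ∈ Finset.Ico (l+1) n, |c (k*(τ+1)+τ-s)|) * H (l*(τ+1)+τ-s) *
              D (l*(τ+1)+τ-s)
          ≤ ∑ l ∈ Finset.range n,
            (∏ k ∈ Finset.Ico (l+1) n, |c (k*(τ+1)+τ-s)|) * H (l*(τ+1)+τ-s) *
              (K * (cbar ^ ((1:ℝ)/((τ:ℝ)+1)))^(l*(τ+1)+τ-s) * D 0) := by
        refine Finset.sum_le_sum fun l hl => ?_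
        exact mul_le_mul_of_nonneg_left (ih _ (hidx l (Finset.mem_range.mp hl)))
          (mul_nonneg (Finset.prod_nonneg fun _ _ => abs_nonneg _) (hHnn _))
      have hsum2 : ∑ l ∈ Finset.range n,
            (∏ k ∈ Finset.Ico (l+1) n, |c (k*(τ+1)+τ-s)|) * H (l*(τ+1)+τ-s) *
              (K * (cbar ^ ((1:ℝ)/((τ:ℝ)+1)))^(l*(τ+1)+τ-s) * D 0)
          = (∑ l ∈ Finset.range n,
              (∏ k ∈ Finset.Ico (l+1) n, |c (k*(τ+1)+τ-s)|) * H (l*(τ+1)+τ-s) *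
                cbar ^ ((l:ℝ) + ((r:ℝ) - s - 1)/((τ:ℝ)+1) - n + 1)) * (K * D 0 * cbar ^ F) := by
        rw [Finset.sum_mul]
        refine Finset.sum_congr rfl fun l _ => ?_
        rw [hμpow]
        have hcast : ((l*(τ+1)+τ-s : ℕ):ℝ) = (l:ℝ)*((τ:ℝ)+1) + (τ:ℝ) - (s:ℝ) := by
          have hle2 : s ≤ l*(τ+1)+τ := le_trans hsτ (Nat.le_add_left _ _)
          rw [Nat.cast_sub hle2]
          push_cast
          ring
        rw [show ((l*(τ+1)+τ-s : ℕ):ℝ)/((τ:ℝ)+1)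
            = ((l:ℝ) + ((r:ℝ) - s - 1)/((τ:ℝ)+1) - n + 1) + F from by
          rw [hcast, hF]; field_simp; ring]
        rw [Real.rpow_add hc0]
        ring
      have hlamB := hlamSum s hsτ n hn1
      have hpos2 : 0 ≤ K * D 0 * cbar ^ F :=
        mul_nonneg (mul_nonneg hKnn (hDnn 0)) (Real.rpow_nonneg hc0.le _)
      have hKF : K * cbar ^ F * (1-lam) = cbar ^ ((n:ℝ) - 1) := by
        rw [hK, div_mul_eq_mul_div, div_mul_cancel₀ _ h1lam.ne', ← Real.rpow_add hc0, hF]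
        congr 1
        ring
      have hKM : K * (cbar ^ ((1:ℝ)/((τ:ℝ)+1)))^m * (1-lam)
          = cbar ^ ((r:ℝ)/((τ:ℝ)+1) - 1 + (m:ℝ)/((τ:ℝ)+1)) := by
        rw [hμpow, hK, div_mul_eq_mul_div, div_mul_cancel₀ _ h1lam.ne', ← Real.rpow_add hc0]
      have hexp2 : (r:ℝ)/((τ:ℝ)+1) - 1 + (m:ℝ)/((τ:ℝ)+1) ≤ (n:ℝ) - 1 := by
        have hZineq : r + (m:ℤ) ≤ ((n*(τ+1):ℕ):ℤ) := by omega
        have hrmn : (r:ℝ) + (m:ℝ) ≤ (n:ℝ)*((τ:ℝ)+1) := by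
          calc (r:ℝ) + (m:ℝ) = ((r + (m:ℤ) : ℤ):ℝ) := by push_cast; ring
            _ ≤ (((n*(τ+1):ℕ):ℤ):ℝ) := by exact_mod_cast hZineq
            _ = (n:ℝ)*((τ:ℝ)+1) := by push_cast; ring
        have h4 : ((r:ℝ)+(m:ℝ))/((τ:ℝ)+1) ≤ (n:ℝ) := (div_le_iff₀ hτR).mpr (by linarith)
        have h5 : (r:ℝ)/((τ:ℝ)+1) + (m:ℝ)/((τ:ℝ)+1) = ((r:ℝ)+(m:ℝ))/((τ:ℝ)+1) := by ring
        linarith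
      have h5 : cbar ^ ((n:ℝ)-1) ≤ cbar ^ ((r:ℝ)/((τ:ℝ)+1) - 1 + (m:ℝ)/((τ:ℝ)+1)) :=
        Real.rpow_le_rpow_of_exponent_ge hc0 hc1 hexp2
      have h6 : cbar^n ≤ cbar ^ ((n:ℝ)-1) := by
        rw [← Real.rpow_natCast cbar n]
        exact Real.rpow_le_rpow_of_exponent_ge hc0 hc1 (by linarith [Nat.cast_nonneg (α := ℝ) n])
      calc |Z ((m:ℤ)+jv)|
          = |Z (((n*(τ+1):ℕ):ℤ) - (s:ℤ))| := by rw [show ((m:ℤ)+jv) = ((n*(τ+1):ℕ):ℤ) - (s:ℤ) from by omega]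
        _ ≤ (∏ k ∈ Finset.range n, |c (k*(τ+1)+τ-s)|) * |Z (-(s:ℤ))| +
            ∑ l ∈ Finset.range n,
              (∏ k ∈ Finset.Ico (l+1) n, |c (k*(τ+1)+τ-s)|) * H (l*(τ+1)+τ-s) *
                D (l*(τ+1)+τ-s) := hunroll s hsτ n
        _ ≤ cbar^n * D 0 +
            ∑ l ∈ Finset.range n,
              (∏ k ∈ Finset.Ico (l+1) n, |c (k*(τ+1)+τ-s)|) * H (l*(τ+1)+τ-s) *
                (K * (cbar ^ ((1:ℝ)/((τ:ℝ)+1)))^(l*(τ+1)+τ-s) * D 0) :=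
            add_le_add (mul_le_mul hprod hZs (abs_nonneg _) (pow_nonneg hc0.le n)) hsum1
        _ = cbar^n * D 0 +
            (∑ l ∈ Finset.range n,
              (∏ k ∈ Finset.Ico (l+1) n, |c (k*(τ+1)+τ-s)|) * H (l*(τ+1)+τ-s) *
                cbar ^ ((l:ℝ) + ((r:ℝ) - s - 1)/((τ:ℝ)+1) - n + 1)) * (K * D 0 * cbar ^ F) := by
            rw [hsum2]
        _ ≤ cbar^n * D 0 + lam * (K * D 0 * cbar ^ F) := by
            have := mul_le_mul_of_nonneg_right hlamB hpos2
            linarith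
        _ ≤ K * (cbar ^ ((1:ℝ)/((τ:ℝ)+1)))^m * D 0 := by
            have key : (cbar^n * D 0 + lam * (K * D 0 * cbar ^ F)) * (1-lam)
                ≤ (K * (cbar ^ ((1:ℝ)/((τ:ℝ)+1)))^m * D 0) * (1-lam) := by
              calc (cbar^n * D 0 + lam * (K * D 0 * cbar ^ F)) * (1-lam)
                  = cbar^n * D 0 * (1-lam) + lam * (K * cbar ^ F * (1-lam)) * D 0 := by ring
                _ = cbar^n * D 0 * (1-lam) + lam * cbar ^ ((n:ℝ)-1) * D 0 := by rw [hKF]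
                _ ≤ cbar ^ ((n:ℝ)-1) * D 0 * (1-lam) + lam * cbar ^ ((n:ℝ)-1) * D 0 := by
                    have := mul_le_mul_of_nonneg_right
                      (mul_le_mul_of_nonneg_right h6 (hDnn 0)) h1lam.le
                    linarith
                _ = cbar ^ ((n:ℝ)-1) * D 0 := by ring
                _ ≤ cbar ^ ((r:ℝ)/((τ:ℝ)+1) - 1 + (m:ℝ)/((τ:ℝ)+1)) * D 0 :=
                    mul_le_mul_of_nonneg_right h5 (hDnn 0)
                _ = K * (cbar ^ ((1:ℝ)/((τ:ℝ)+1)))^m * (1-lam) * D 0 := by rw [hKM]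
                _ = (K * (cbar ^ ((1:ℝ)/((τ:ℝ)+1)))^m * D 0) * (1-lam) := by ring
            exact le_of_mul_le_mul_right key h1lam
    -- end strong induction
  intro m
  have e1 : (fun j : (Finset.Icc r (0:ℤ)) => x ((m:ℤ) + (j:ℤ))) -
      (fun j : (Finset.Icc r (0:ℤ)) => y ((m:ℤ) + (j:ℤ)))
      = fun j : (Finset.Icc r (0:ℤ)) => Z ((m:ℤ) + (j:ℤ)) := rfl
  have e0 : (fun j : (Finset.Icc r (0:ℤ)) => x ((j:ℤ))) -
      (fun j : (Finset.Icc r (0:ℤ)) => y ((j:ℤ)))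
      = fun j : (Finset.Icc r (0:ℤ)) => Z ((0:ℤ) + (j:ℤ)) := by
    funext j
    simp [hZ]
  rw [e1, e0]
  exact main m
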